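/- Let ξ > 0 be a real number with ξ² > 32, and let γ be a real number with γ² = 1 + ξ²/4. Then the characteristic polynomial of the 3×3 real matrix F_{γ,ξ} = [[0, 1, 0], [-1, 0, γ], [0, -γ, -ξ]] factors as (X + ξ/2)·(X + (ξ + √(ξ² − 32))/4)·(X + (ξ − √(ξ² − 32))/4); in particular F_{γ,ξ} has the three pairwise distinct real eigenvalues −ξ/2, −(ξ + √(ξ² − 32))/4, and −(ξ − √(ξ² − 32))/4. -/

import Mathlib

open Matrix Polynomial

/-- Let `ξ > 0` with `ξ² > 32` and let `γ` satisfy `γ² = 1 + ξ²/4`. The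
characteristic polynomial of the drift matrix
`F = [[0, 1, 0], [-1, 0, γ], [0, -γ, -ξ]]` of third-order Langevin dynamics
factors as `(X + ξ/2)(X + (ξ + √(ξ² − 32))/4)(X + (ξ − √(ξ² − 32))/4)`; in
particular `F` has the three pairwise distinct real eigenvalues `−ξ/2`,
`−(ξ + √(ξ² − 32))/4`, `−(ξ − √(ξ² − 32))/4`. -/
theorem charpoly_third_order_langevin (ξ γ : ℝ) (hξ : 0 < ξ) (hξ32 : 32 < ξ ^ 2)
    (hγ : γ ^ 2 = 1 + ξ ^ 2 / 4) :
    (Matrix.charpoly (!![0, 1, 0; -1, 0, γ; 0, -γ, -ξ])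
        = (X + C (ξ / 2)) * (X + C ((ξ + Real.sqrt (ξ ^ 2 - 32)) / 4))
            * (X + C ((ξ - Real.sqrt (ξ ^ 2 - 32)) / 4)))
    ∧ (-(ξ / 2) ≠ -((ξ + Real.sqrt (ξ ^ 2 - 32)) / 4)
        ∧ -(ξ / 2) ≠ -((ξ - Real.sqrt (ξ ^ 2 - 32)) / 4)
        ∧ -((ξ + Real.sqrt (ξ ^ 2 - 32)) / 4) ≠ -((ξ - Real.sqrt (ξ ^ 2 - 32)) / 4))
    ∧ (-(ξ / 2) ∈ spectrum ℝ (!![0, 1, 0; -1, 0, γ; 0, -γ, -ξ])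
        ∧ -((ξ + Real.sqrt (ξ ^ 2 - 32)) / 4) ∈ spectrum ℝ (!![0, 1, 0; -1, 0, γ; 0, -γ, -ξ])
        ∧ -((ξ - Real.sqrt (ξ ^ 2 - 32)) / 4) ∈ spectrum ℝ (!![0, 1, 0; -1, 0, γ; 0, -γ, -ξ])) := by
  set s := Real.sqrt (ξ ^ 2 - 32) with hsdef
  have hs2 : s ^ 2 = ξ ^ 2 - 32 := Real.sq_sqrt (by linarith)
  have hs_pos : 0 < s := Real.sqrt_pos.mpr (by linarith)
  have hs_lt : s < ξ := by
    nlinarith [hs_pos, hξ]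
  -- spectrum membership helper
  have hspec : ∀ a : ℝ, a ^ 3 + ξ * a ^ 2 + (1 + γ ^ 2) * a + ξ = 0 →
      a ∈ spectrum ℝ (!![0, 1, 0; -1, 0, γ; 0, -γ, -ξ]) := by
    intro a ha
    rw [spectrum.mem_iff]
    intro hu
    rw [Matrix.isUnit_iff_isUnit_det] at hu
    rw [isUnit_iff_ne_zero] at hu
    apply hu
    have : (algebraMap ℝ (Matrix (Fin 3) (Fin 3) ℝ) a - !![0, 1, 0; -1, 0, γ; 0, -γ, -ξ])
        = !![a, -1, 0; 1, a, -γ; 0, γ, a + ξ] := by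
      ext i j
      fin_cases i <;> fin_cases j <;>
        simp [Matrix.algebraMap_matrix_apply] <;> ring
    rw [this, Matrix.det_fin_three]
    norm_num [Matrix.cons_val_two, Matrix.vecHead, Matrix.vecTail]
    nlinarith [ha]
  have key : Matrix.charpoly (!![0, 1, 0; -1, 0, γ; 0, -γ, -ξ])
      = X ^ 3 + C ξ * X ^ 2 + C (1 + γ ^ 2) * X + C ξ := by
    rw [Matrix.charpoly, Matrix.det_fin_three]
    norm_num [charmatrix_apply, Matrix.diagonal, Fin.ext_iff, Matrix.cons_val_two, Matrix.vecHead, Matrix.vecTail]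
    ring
  have expand : ∀ a b : ℝ, (X + C (ξ / 2)) * (X + C a) * (X + C b)
      = X ^ 3 + C (ξ / 2 + a + b) * X ^ 2 + C (ξ / 2 * a + ξ / 2 * b + a * b) * X
          + C (ξ / 2 * a * b) := by
    intro a b
    simp only [C_add, C_mul]
    ring
  have h1 : ξ / 2 + (ξ + s) / 4 + (ξ - s) / 4 = ξ := by ring
  have h2 : ξ / 2 * ((ξ + s) / 4) + ξ / 2 * ((ξ - s) / 4) + (ξ + s) / 4 * ((ξ - s) / 4)
      = 1 + γ ^ 2 := by nlinarith [hs2, hγ]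
  have h3 : ξ / 2 * ((ξ + s) / 4) * ((ξ - s) / 4) = ξ := by nlinarith [hs2]
  refine ⟨?_, ⟨?_, ?_, ?_⟩, ?_, ?_, ?_⟩
  · rw [key, expand, h1, h2, h3]
  · intro h; nlinarith [neg_injective h]
  · intro h; nlinarith [neg_injective h]
  · intro h; nlinarith [neg_injective h]
  · exact hspec _ (by linear_combination (-(ξ / 2)) * hγ)
  · exact hspec _ (by
      linear_combination (-((ξ + s) / 4)) * hγ + (-((ξ + s) / 4) + ξ / 2) / 16 * hs2)
  · exact hspec _ (by
      linear_combination (-((ξ - s) / 4)) * hγ + (-((ξ - s) / 4) + ξ / 2) / 16 * hs2)
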